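/- arXiv:1201.1672 — 8 statements merged into one kernel-verified Lean document; each statement's English description precedes it below -/
import Mathlib

section
/- Let E be a finite-dimensional complex vector space and H : E → E a linear operator. Suppose E₁, …, E_k are H-invariant subspaces such that the spectra of the restrictions H|E_i are pairwise disjoint. Then for any vectors v₁ ∈ E₁, …, v_k ∈ E_k, the smallest H-invariant subspace containing {v₁, …, v_k} equals the smallest H-invariant subspace containing the single vector v₁ + ⋯ + v_k. -/
open Polynomial

-- invariant subspaces are stable under aeval
lemma aeval_mem_of_stable {E : Type*} [AddCommGroup E] [Module ℂ E]
    (H : Module.End ℂ E) (W : Submodule ℂ E) (hW : ∀ x ∈ W, H x ∈ W)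
    (q : ℂ[X]) {x : E} (hx : x ∈ W) : (aeval H q) x ∈ W := by
  induction q using Polynomial.induction_on' with
  | add a b ha hb => rw [map_add, LinearMap.add_apply]; exact W.add_mem ha hb
  | monomial n a =>
      rw [aeval_monomial]
      have hpow : (H ^ n) x ∈ W := by
        induction n with
        | zero => simpa using hx
        | succ m ih => rw [pow_succ', Module.End.mul_apply]; exact hW _ ih
      simpa [Algebra.smul_def] using W.smul_mem a hpow

lemma aeval_restrict_apply {E : Type*} [AddCommGroup E] [Module ℂ E]
    (H : Module.End ℂ E) (p : Submodule ℂ E) (h : ∀ x ∈ p, H x ∈ p)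
    (q : ℂ[X]) (x : p) : (aeval H q) (x : E) = ((aeval (H.restrict h) q) x : E) := by
  induction q using Polynomial.induction_on' with
  | add a b ha hb => simp [ha, hb]
  | monomial n a =>
      simp only [aeval_monomial, Algebra.smul_def] at *
      simp only [Module.algebraMap_end_eq_smul_id, Module.End.mul_apply,
        LinearMap.smul_apply, LinearMap.id_apply]
      rw [Module.End.pow_restrict n h]
      simp [LinearMap.restrict_apply]



/-- For a linear operator `H` on a finite-dimensional complex vector space and
`H`-invariant subspaces `p i` whose restricted spectra are pairwise disjoint,
the smallest `H`-invariant subspace containing vectors `v i ∈ p i` equals the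
smallest `H`-invariant subspace containing their sum. -/
theorem stmt0 {E : Type*} [AddCommGroup E] [Module ℂ E] [FiniteDimensional ℂ E]
    (H : Module.End ℂ E) {k : ℕ} (p : Fin k → Submodule ℂ E)
    (hinv : ∀ i, ∀ x ∈ p i, H x ∈ p i)
    (hspec : ∀ i j, i ≠ j →
      Disjoint (spectrum ℂ (H.restrict (hinv i))) (spectrum ℂ (H.restrict (hinv j))))
    (v : Fin k → E) (hv : ∀ i, v i ∈ p i) :
    Submodule.span ℂ {x : E | ∃ t : ℕ, ∃ i : Fin k, x = (H ^ t) (v i)} =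
      Submodule.span ℂ {x : E | ∃ t : ℕ, x = (H ^ t) (∑ i, v i)} := by
  set f : ∀ i : Fin k, Module.End ℂ (p i) := fun i => H.restrict (hinv i) with hf
  set μ : Fin k → ℂ[X] := fun i => minpoly ℂ (f i) with hμ
  -- minpoly kills vectors in p i
  have hkill : ∀ i : Fin k, ∀ x ∈ p i, (aeval H (μ i)) x = 0 := by
    intro i x hx
    rw [aeval_restrict_apply H (p i) (hinv i) (μ i) ⟨x, hx⟩]
    show (((aeval (f i) (minpoly ℂ (f i))) ⟨x, hx⟩ : p i) : E) = 0
    rw [minpoly.aeval]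
    simp
  -- pairwise coprimality of minimal polynomials
  have hcop : ∀ i j : Fin k, i ≠ j → IsCoprime (μ i) (μ j) := by
    intro i j hij
    rw [Polynomial.isCoprime_iff_aeval_ne_zero_of_isAlgClosed (k := ℂ) ℂ]
    intro a
    by_contra hcon
    push_neg at hcon
    obtain ⟨h1, h2⟩ := hcon
    have e1 : a ∈ spectrum ℂ (f i) := by
      rw [← Module.End.hasEigenvalue_iff_mem_spectrum,
        Module.End.hasEigenvalue_iff_isRoot]
      simpa [Polynomial.IsRoot, ← Polynomial.coe_aeval_eq_eval] using h1
    have e2 : a ∈ spectrum ℂ (f j) := by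
      rw [← Module.End.hasEigenvalue_iff_mem_spectrum,
        Module.End.hasEigenvalue_iff_isRoot]
      simpa [Polynomial.IsRoot, ← Polynomial.coe_aeval_eq_eval] using h2
    exact (hspec i j hij).le_bot ⟨e1, e2⟩ 
  set W' : Submodule ℂ E :=
    Submodule.span ℂ {x : E | ∃ t : ℕ, x = (H ^ t) (∑ i, v i)} with hW'def
  have hW' : ∀ x ∈ W', H x ∈ W' := by
    intro x hx
    induction hx using Submodule.span_induction with
    | mem y hy =>
        obtain ⟨t, rfl⟩ := hy
        exact Submodule.subset_span ⟨t + 1, by rw [pow_succ', Module.End.mul_apply]⟩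
    | zero => simp
    | add y z _ _ hy hz => rw [map_add]; exact W'.add_mem hy hz
    | smul c y _ hy => rw [map_smul]; exact W'.smul_mem c hy
  have hsum : (∑ i, v i) ∈ W' := Submodule.subset_span ⟨0, by simp⟩
  apply le_antisymm
  · rw [Submodule.span_le]
    rintro x ⟨t, i, rfl⟩
    -- show v i ∈ W', then apply H^t
    have hvi : v i ∈ W' := by
      set q : ℂ[X] := ∏ j ∈ Finset.univ.erase i, μ j with hq
      have hcopq : IsCoprime (μ i) q :=
        IsCoprime.prod_right fun j hj => hcop i j (Finset.ne_of_mem_erase hj).symm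
      obtain ⟨a, b, hab⟩ := hcopq
      have hqsum : (aeval H q) (∑ j, v j) = (aeval H q) (v i) := by
        rw [map_sum]
        apply Finset.sum_eq_single_of_mem i (Finset.mem_univ i)
        intro j _ hji
        obtain ⟨c, hc⟩ := Finset.dvd_prod_of_mem μ (Finset.mem_erase.mpr ⟨hji, Finset.mem_univ j⟩)
        rw [hq, hc, map_mul, Module.End.mul_apply]
        exact hkill j _ (aeval_mem_of_stable H (p j) (hinv j) c (hv j))
      have hv1 : v i = (aeval H (a * μ i)) (v i) + (aeval H (b * q)) (v i) := by
        rw [← LinearMap.add_apply, ← map_add, hab]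
        simp
      have hz : (aeval H (a * μ i)) (v i) = 0 := by
        rw [map_mul, Module.End.mul_apply, hkill i _ (hv i), map_zero]
      rw [hv1, hz, zero_add, map_mul, Module.End.mul_apply, ← hqsum]
      exact aeval_mem_of_stable H W' hW' b
        (aeval_mem_of_stable H W' hW' q hsum)
    have := aeval_mem_of_stable H W' hW' (X ^ t) hvi
    simpa using this
  · rw [Submodule.span_le]
    rintro x ⟨t, rfl⟩
    rw [map_sum]
    exact Submodule.sum_mem _ fun i _ => Submodule.subset_span ⟨t, i, rfl⟩
end

section
/- The space of all d×d Toeplitz matrices over ℂ (matrices constant along each diagonal) is a transitive subspace of Mat_{d×d}(ℂ), i.e., for every nonzero v ∈ ℂᵈ and every w ∈ ℂᵈ there is a Toeplitz matrix T with T·v = w. -/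
noncomputable def toepAux (d : ℕ) (v w : Fin d → ℂ) (k : Fin d) : ℕ → ℂ
  | i =>
    ((if hi : i < d then w ⟨i, hi⟩ else 0) -
      ∑ j ∈ (Finset.univ.filter
          (fun j : Fin d => (k : ℕ) < (j : ℕ) ∧ (j : ℕ) ≤ i + (k : ℕ))).attach,
        v j.1 * toepAux d v w k (i + (k : ℕ) - (j.1 : ℕ))) / v k
  decreasing_by
    have hj := j.2
    simp only [Finset.mem_filter] at hj
    omega

/-- The space of `d × d` complex Toeplitz matrices (entry `(i,j)` equal to
`t (i - j)`) is transitive: every nonzero vector can be mapped to any vector. -/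
theorem stmt5 (d : ℕ) (v : Fin d → ℂ) (hv : v ≠ 0) (w : Fin d → ℂ) :
    ∃ t : ℤ → ℂ,
      (Matrix.of fun i j : Fin d => t ((i : ℤ) - (j : ℤ))).mulVec v = w := by
  classical
  obtain ⟨j0, hj0⟩ := Function.ne_iff.mp hv
  set S := Finset.univ.filter (fun j : Fin d => v j ≠ 0) with hSdef
  have hS : S.Nonempty := ⟨j0, by simp [hSdef]; simpa using hj0⟩
  set k := S.min' hS with hkdef
  have hk : v k ≠ 0 := by have := S.min'_mem hS; simpa [hSdef] using this
  have hlt : ∀ j : Fin d, (j : ℕ) < (k : ℕ) → v j = 0 := by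
    intro j hj
    by_contra h
    have h2 := S.min'_le j (by simp [hSdef, h])
    rw [← hkdef] at h2
    exact absurd (Fin.le_def.mp h2) (by omega)
  set F := toepAux d v w k with hF
  refine ⟨fun m => if h : 0 ≤ m + (k : ℕ) then F (m + (k : ℕ)).toNat else 0, ?_⟩
  funext i
  simp only [Matrix.mulVec, dotProduct, Matrix.of_apply]
  have hterm : ∀ j : Fin d,
      (if h : 0 ≤ (i : ℤ) - (j : ℤ) + (k : ℕ) then F ((i : ℤ) - (j : ℤ) + (k : ℕ)).toNat
        else 0) * v j
      = (if (j : ℕ) ≤ (i : ℕ) + (k : ℕ) then F ((i : ℕ) + (k : ℕ) - (j : ℕ)) else 0) * v j := by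
    intro j
    by_cases h : (j : ℕ) ≤ (i : ℕ) + (k : ℕ)
    · rw [dif_pos (by omega), if_pos h]
      congr 2
      omega
    · rw [dif_neg (by omega), if_neg h]
  rw [Finset.sum_congr rfl fun j _ => hterm j]
  set T := Finset.univ.filter
      (fun j : Fin d => (k : ℕ) < (j : ℕ) ∧ (j : ℕ) ≤ (i : ℕ) + (k : ℕ)) with hT
  have hsub : T ⊆ Finset.univ.erase k := by
    intro j hj
    simp only [hT, Finset.mem_filter] at hj
    exact Finset.mem_erase.mpr ⟨fun h => by rw [h] at hj; exact absurd hj.2.1 (lt_irrefl _),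
      Finset.mem_univ j⟩
  have hsplit : (∑ j : Fin d,
      (if (j : ℕ) ≤ (i : ℕ) + (k : ℕ) then F ((i : ℕ) + (k : ℕ) - (j : ℕ)) else 0) * v j)
      = F (i : ℕ) * v k + ∑ j ∈ T, v j * F ((i : ℕ) + (k : ℕ) - (j : ℕ)) := by
    rw [← Finset.add_sum_erase _ _ (Finset.mem_univ k)]
    congr 1
    · rw [if_pos (by omega)]
      congr 2
      omega
    · rw [← Finset.sum_subset hsub (fun j hj hjT => ?_)]
      · exact Finset.sum_congr rfl fun j hj => by
          simp only [hT, Finset.mem_filter] at hj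
          rw [if_pos hj.2.2, mul_comm]
      · simp only [Finset.mem_erase] at hj
        simp only [hT, Finset.mem_filter, not_and, not_lt, Finset.mem_univ, true_and,
          not_le] at hjT
        by_cases h : (j : ℕ) ≤ (i : ℕ) + (k : ℕ)
        · have hne : (j : ℕ) ≠ (k : ℕ) := fun hh => hj.1 (Fin.ext hh)
          have hjk : (j : ℕ) < (k : ℕ) := by
            rcases Nat.lt_trichotomy (j : ℕ) (k : ℕ) with h2 | h2 | h2
            · exact h2
            · exact absurd h2 hne
            · exact absurd h (not_le.mpr (hjT h2))
          rw [hlt j hjk, mul_zero]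
        · rw [if_neg h, zero_mul]
  rw [hsplit, hF, toepAux]
  rw [Finset.sum_attach T (fun j => v j * toepAux d v w k ((i : ℕ) + (k : ℕ) - (j : ℕ)))]
  rw [dif_pos i.isLt]
  simp only [Fin.eta]
  rw [div_mul_cancel₀ _ hk]
  ring
end

section
/- The space of all d×d complex Hankel matrices is a transitive subspace of Mat_{d×d}(ℂ). -/
open Finset

/-- Extend `v : Fin d → ℂ` to `ℕ → ℂ` by zero. -/
noncomputable def Vext (d : ℕ) (v : Fin d → ℂ) (j : ℕ) : ℂ :=
  if h : j < d then v ⟨j, h⟩ else 0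

/-- Recursively defined Hankel coefficients. -/
noncomputable def Hfun (d : ℕ) (v w : Fin d → ℂ) (k : Fin d) : ℕ → ℂ
  | n =>
    if hn : (k : ℕ) ≤ n ∧ n - k < d then
      (w ⟨n - k, hn.2⟩ -
        ∑ j ∈ (Finset.range (k : ℕ)).attach,
          Hfun d v w k (n - (k : ℕ) + j.1) * Vext d v j.1) / v k
    else 0
  decreasing_by
    have hj := Finset.mem_range.mp j.2
    omega

theorem Hfun_key (d : ℕ) (v w : Fin d → ℂ) (k : Fin d) (hvk : v k ≠ 0)
    (n : ℕ) (h1 : (k : ℕ) ≤ n) (h2 : n - (k : ℕ) < d) :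
    Hfun d v w k n * v k =
      w ⟨n - k, h2⟩ - ∑ j ∈ Finset.range (k : ℕ),
        Hfun d v w k (n - (k : ℕ) + j) * Vext d v j := by
  rw [Hfun]
  rw [dif_pos ⟨h1, h2⟩, div_mul_cancel₀ _ hvk]
  congr 1
  exact Finset.sum_attach (Finset.range (k:ℕ)) (fun j => Hfun d v w k (n - (k : ℕ) + j) * Vext d v j)

/-- The space of `d × d` complex Hankel matrices (entry `(i,j)` equal to
`h (i + j)`, constant along anti-diagonals) is transitive. -/
theorem stmt6 (d : ℕ) (v : Fin d → ℂ) (hv : v ≠ 0) (w : Fin d → ℂ) :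
    ∃ h : ℕ → ℂ,
      (Matrix.of fun i j : Fin d => h ((i : ℕ) + (j : ℕ))).mulVec v = w := by
  classical
  have hne : (Finset.univ.filter fun j : Fin d => v j ≠ 0).Nonempty := by
    by_contra h
    apply hv
    funext j
    simp only [Pi.zero_apply]
    by_contra hj
    exact h ⟨j, by simp [hj]⟩
  set k := (Finset.univ.filter fun j : Fin d => v j ≠ 0).max' hne with hk
  have hvk : v k ≠ 0 := by
    have := Finset.max'_mem _ hne
    simpa using this
  have hmax : ∀ j : Fin d, k < j → v j = 0 := by
    intro j hj
    by_contra hj'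
    exact absurd (Finset.le_max' _ j (by simpa using hj')) (not_le.mpr hj)
  refine ⟨Hfun d v w k, ?_⟩
  funext i
  simp only [Matrix.mulVec, dotProduct, Matrix.of_apply]
  set f : ℕ → ℂ := fun j => Hfun d v w k ((i : ℕ) + j) * Vext d v j with hf
  have step1 : ∑ j : Fin d, Hfun d v w k ((i : ℕ) + (j : ℕ)) * v j
      = ∑ j ∈ Finset.range d, f j := by
    rw [← Fin.sum_univ_eq_sum_range f d]
    refine Finset.sum_congr rfl fun j _ => ?_
    simp [hf, Vext, j.2]
  rw [step1]
  have hksub : Finset.range ((k : ℕ) + 1) ⊆ Finset.range d :=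
    Finset.range_subset_range.mpr k.2
  have step2 : ∑ j ∈ Finset.range d, f j = ∑ j ∈ Finset.range ((k : ℕ) + 1), f j := by
    refine (Finset.sum_subset hksub fun x hx hx' => ?_).symm
    have hxd : x < d := Finset.mem_range.mp hx
    have hxk : (k : ℕ) < x := by
      simp only [Finset.mem_range, not_lt] at hx'
      omega
    have hv0 : v ⟨x, hxd⟩ = 0 := hmax ⟨x, hxd⟩ hxk
    simp [hf, Vext, hxd, hv0]
  rw [step2, Finset.sum_range_succ]
  have hn1 : (k : ℕ) ≤ (i : ℕ) + (k : ℕ) := Nat.le_add_left _ _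
  have hn2 : (i : ℕ) + (k : ℕ) - (k : ℕ) < d := by simp
  have key := Hfun_key d v w k hvk ((i : ℕ) + (k : ℕ)) hn1 hn2
  have hwi : (⟨(i : ℕ) + (k : ℕ) - (k : ℕ), hn2⟩ : Fin d) = i := Fin.ext (by simp)
  rw [hwi] at key
  have hik : (i : ℕ) + (k : ℕ) - (k : ℕ) = (i : ℕ) := by omega
  simp only [hik] at key
  have hVk : Vext d v (k : ℕ) = v k := by simp [Vext, k.2]
  have hfk : f (k : ℕ) = w i - ∑ j ∈ Finset.range (k : ℕ), f j := by
    rw [hf]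
    simp only
    rw [hVk, key]
  rw [hfk]
  ring
end

section
/- Let F be a nonempty finite set, (x_α)_{α∈F} positive real numbers, and F = F₀ ⊔ F₁ a partition. For ε, δ ∈ {0,1} set Σ_{εδ} = Σ_{(α,β)∈F_ε×F_δ} min(x_α, x_β). Then Σ₀₀ − 2Σ₀₁ + Σ₁₁ ≥ (|F₀| − |F₁|)² · min_{α∈F} x_α. In particular Σ₀₁ ≤ (Σ₀₀ + Σ₁₁)/2, with equality only if |F₀| = |F₁|. -/
lemma min_psd {F : Type*} [DecidableEq F] (s : F → ℝ) (S : Finset F) :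
    ∀ y : F → ℝ, (∀ α ∈ S, 0 ≤ y α) →
    0 ≤ ∑ α ∈ S, ∑ β ∈ S, s α * s β * min (y α) (y β) := by
  induction S using Finset.strongInduction with
  | _ S ih =>
    intro y hy
    rcases S.eq_empty_or_nonempty with rfl | hS
    · simp
    obtain ⟨γ, hγ, hmin⟩ := S.exists_min_image y hS
    set c := y γ with hc
    have hdecomp : ∀ α β : F, s α * s β * min (y α) (y β)
        = s α * s β * c + s α * s β * min (y α - c) (y β - c) := by
      intro α β
      rw [min_sub_sub_right]; ring
    have hsplit : ∑ α ∈ S, ∑ β ∈ S, s α * s β * min (y α) (y β)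
        = (∑ α ∈ S, ∑ β ∈ S, s α * s β * c)
          + ∑ α ∈ S, ∑ β ∈ S, s α * s β * min (y α - c) (y β - c) := by
      rw [← Finset.sum_add_distrib]
      refine Finset.sum_congr rfl fun α _ => ?_
      rw [← Finset.sum_add_distrib]
      exact Finset.sum_congr rfl fun β _ => hdecomp α β
    have h1 : ∑ α ∈ S, ∑ β ∈ S, s α * s β * c = (∑ α ∈ S, s α) * (∑ α ∈ S, s α) * c := by
      rw [Finset.sum_mul_sum, Finset.sum_mul]
      exact Finset.sum_congr rfl fun α _ => by rw [Finset.sum_mul]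
    have hz : ∀ α ∈ S, s α * s γ * min (y α - c) (y γ - c) = 0 := by
      intro α hα
      have : min (y α - c) (y γ - c) = 0 := by
        rw [hc, sub_self, min_eq_right (by linarith [hmin α hα])]
      rw [this, mul_zero]
    have hz' : ∀ β ∈ S, s γ * s β * min (y γ - c) (y β - c) = 0 := by
      intro β hβ
      have : min (y γ - c) (y β - c) = 0 := by
        rw [hc, sub_self, min_eq_left (by linarith [hmin β hβ])]
      rw [this, mul_zero]
    have inner_eq : ∀ α ∈ S, ∑ β ∈ S, s α * s β * min (y α - c) (y β - c)
        = ∑ β ∈ S.erase γ, s α * s β * min (y α - c) (y β - c) := by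
      intro α hα
      refine (Finset.sum_subset (S.erase_subset γ) fun β hβ hβ' => ?_).symm
      have hβγ : β = γ := by
        by_contra h; exact hβ' (Finset.mem_erase.mpr ⟨h, hβ⟩)
      subst hβγ; exact hz α hα
    have h2 : ∑ α ∈ S, ∑ β ∈ S, s α * s β * min (y α - c) (y β - c)
        = ∑ α ∈ S.erase γ, ∑ β ∈ S.erase γ, s α * s β * min (y α - c) (y β - c) := by
      rw [Finset.sum_congr rfl inner_eq]
      refine (Finset.sum_subset (S.erase_subset γ) fun α hα hα' => ?_).symm
      have hαγ : α = γ := by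
        by_contra h; exact hα' (Finset.mem_erase.mpr ⟨h, hα⟩)
      subst hαγ
      exact Finset.sum_eq_zero fun β hβ => hz' β (Finset.mem_of_mem_erase hβ)
    have hT : 0 ≤ ∑ α ∈ S.erase γ, ∑ β ∈ S.erase γ, s α * s β * min (y α - c) (y β - c) :=
      ih (S.erase γ) (Finset.erase_ssubset hγ) (fun α => y α - c)
        (fun α hα => sub_nonneg.mpr (hmin α (Finset.mem_of_mem_erase hα)))
    rw [hsplit, h1, h2]
    have hc0 : 0 ≤ c := hy γ hγ
    nlinarith [mul_self_nonneg (∑ α ∈ S, s α)]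

/-- Combinatorial lemma: for positive reals `x α` indexed by a nonempty finite set
`F = F₀ ⊔ F₁`, with `Σ_{εδ} = ∑_{(α,β) ∈ F_ε × F_δ} min (x α) (x β)`, one has
`Σ₀₀ − 2Σ₀₁ + Σ₁₁ ≥ (|F₀| − |F₁|)² · min x`; in particular
`Σ₀₁ ≤ (Σ₀₀ + Σ₁₁)/2`, with equality only if `|F₀| = |F₁|`. -/
theorem stmt7 {F : Type*} [Fintype F] [Nonempty F] [DecidableEq F]
    (x : F → ℝ) (hx : ∀ α, 0 < x α) (F0 F1 : Finset F)
    (hdisj : Disjoint F0 F1) (hunion : F0 ∪ F1 = Finset.univ) :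
    ((∑ α ∈ F0, ∑ β ∈ F0, min (x α) (x β))
        - 2 * (∑ α ∈ F0, ∑ β ∈ F1, min (x α) (x β))
        + ∑ α ∈ F1, ∑ β ∈ F1, min (x α) (x β)
      ≥ ((F0.card : ℝ) - (F1.card : ℝ)) ^ 2
          * Finset.univ.inf' Finset.univ_nonempty x) ∧
    ((∑ α ∈ F0, ∑ β ∈ F1, min (x α) (x β))
      ≤ ((∑ α ∈ F0, ∑ β ∈ F0, min (x α) (x β))
          + ∑ α ∈ F1, ∑ β ∈ F1, min (x α) (x β)) / 2) ∧
    ((∑ α ∈ F0, ∑ β ∈ F1, min (x α) (x β))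
        = ((∑ α ∈ F0, ∑ β ∈ F0, min (x α) (x β))
            + ∑ α ∈ F1, ∑ β ∈ F1, min (x α) (x β)) / 2 →
      F0.card = F1.card) := by
  set m : ℝ := Finset.univ.inf' Finset.univ_nonempty x with hmdef
  have hm : ∀ α, m ≤ x α := fun α => Finset.inf'_le x (Finset.mem_univ α)
  have hmpos : 0 < m := (Finset.lt_inf'_iff _).mpr fun b _ => hx b
  set s : F → ℝ := fun α => if α ∈ F0 then (1 : ℝ) else -1 with hsdef
  have hs0 : ∀ α ∈ F0, s α = 1 := fun α hα => if_pos hα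
  have hs1 : ∀ α ∈ F1, s α = -1 := fun α hα =>
    if_neg (Finset.disjoint_right.mp hdisj hα)
  set A := ∑ α ∈ F0, ∑ β ∈ F0, min (x α) (x β) with hA
  set B := ∑ α ∈ F0, ∑ β ∈ F1, min (x α) (x β) with hB
  set C := ∑ α ∈ F1, ∑ β ∈ F1, min (x α) (x β) with hC
  set Q := ∑ α ∈ Finset.univ, ∑ β ∈ Finset.univ, s α * s β * min (x α) (x β) with hQdef
  have hBB : ∑ α ∈ F1, ∑ β ∈ F0, min (x α) (x β) = B := by
    rw [Finset.sum_comm]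
    exact Finset.sum_congr rfl fun α _ => Finset.sum_congr rfl fun β _ => min_comm _ _
  have e00 : ∑ α ∈ F0, ∑ β ∈ F0, s α * s β * min (x α) (x β) = A :=
    Finset.sum_congr rfl fun α hα => Finset.sum_congr rfl fun β hβ => by
      rw [hs0 α hα, hs0 β hβ]; ring
  have e01 : ∑ α ∈ F0, ∑ β ∈ F1, s α * s β * min (x α) (x β) = -B := by
    rw [hB, ← Finset.sum_neg_distrib]
    exact Finset.sum_congr rfl fun α hα => by
      rw [← Finset.sum_neg_distrib]
      exact Finset.sum_congr rfl fun β hβ => by rw [hs0 α hα, hs1 β hβ]; ring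
  have e10 : ∑ α ∈ F1, ∑ β ∈ F0, s α * s β * min (x α) (x β) = -B := by
    rw [← hBB, ← Finset.sum_neg_distrib]
    exact Finset.sum_congr rfl fun α hα => by
      rw [← Finset.sum_neg_distrib]
      exact Finset.sum_congr rfl fun β hβ => by rw [hs1 α hα, hs0 β hβ]; ring
  have e11 : ∑ α ∈ F1, ∑ β ∈ F1, s α * s β * min (x α) (x β) = C :=
    Finset.sum_congr rfl fun α hα => Finset.sum_congr rfl fun β hβ => by
      rw [hs1 α hα, hs1 β hβ]; ring
  have hQ : Q = A - 2 * B + C := by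
    rw [hQdef, ← hunion]
    simp only [Finset.sum_union hdisj, Finset.sum_add_distrib]
    rw [e00, e01, e10, e11]; ring
  have hsum_s : ∑ α ∈ Finset.univ, s α = (F0.card : ℝ) - (F1.card : ℝ) := by
    rw [← hunion, Finset.sum_union hdisj,
      Finset.sum_congr rfl hs0, Finset.sum_congr rfl hs1]
    simp [sub_eq_add_neg]
  -- decompose Q
  have hdecomp : ∀ α β : F, s α * s β * min (x α) (x β)
      = s α * s β * m + s α * s β * min (x α - m) (x β - m) := by
    intro α β; rw [min_sub_sub_right]; ring
  have hsplit : Q = (∑ α ∈ Finset.univ, ∑ β ∈ Finset.univ, s α * s β * m)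
      + ∑ α ∈ Finset.univ, ∑ β ∈ Finset.univ, s α * s β * min (x α - m) (x β - m) := by
    rw [hQdef, ← Finset.sum_add_distrib]
    refine Finset.sum_congr rfl fun α _ => ?_
    rw [← Finset.sum_add_distrib]
    exact Finset.sum_congr rfl fun β _ => hdecomp α β
  have h1 : ∑ α ∈ Finset.univ, ∑ β ∈ Finset.univ, s α * s β * m
      = (∑ α ∈ Finset.univ, s α) * (∑ α ∈ Finset.univ, s α) * m := by
    rw [Finset.sum_mul_sum, Finset.sum_mul]
    exact Finset.sum_congr rfl fun α _ => by rw [Finset.sum_mul]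
  have hT : 0 ≤ ∑ α ∈ Finset.univ, ∑ β ∈ Finset.univ, s α * s β * min (x α - m) (x β - m) :=
    min_psd s Finset.univ (fun α => x α - m) (fun α _ => sub_nonneg.mpr (hm α))
  have hmain : A - 2 * B + C ≥ ((F0.card : ℝ) - (F1.card : ℝ)) ^ 2 * m := by
    rw [← hQ]
    rw [hsplit, h1, hsum_s]
    nlinarith [sq_nonneg ((F0.card : ℝ) - (F1.card : ℝ))]
  refine ⟨hmain, ?_, ?_⟩
  · nlinarith [sq_nonneg ((F0.card : ℝ) - (F1.card : ℝ))]
  · intro heq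
    have hsq : ((F0.card : ℝ) - (F1.card : ℝ)) ^ 2 = 0 := by
      nlinarith [sq_nonneg ((F0.card : ℝ) - (F1.card : ℝ))]
    have : (F0.card : ℝ) = (F1.card : ℝ) := by
      have := pow_eq_zero_iff (n := 2) (by norm_num) |>.mp hsq
      linarith
    exact_mod_cast this
end

section
/- If a finite family of real n×m matrices spans a subspace of Mat_{n×m}(ℝ) that is not transitive over ℝ, then, regarded as complex matrices, they span a subspace of Mat_{n×m}(ℂ) that is not transitive over ℂ. -/
/-- If real matrices `B₁, …, B_k` span a subspace of `Mat_{n×m}(ℝ)` that is not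
transitive over `ℝ`, then viewed as complex matrices they span a subspace of
`Mat_{n×m}(ℂ)` that is not transitive over `ℂ`. -/
theorem stmt10 {n m k : ℕ} (B : Fin k → Matrix (Fin n) (Fin m) ℝ)
    (h : ¬ ∀ v : Fin m → ℝ, v ≠ 0 → ∀ w : Fin n → ℝ,
        ∃ M ∈ Submodule.span ℝ (Set.range B), M.mulVec v = w) :
    ¬ ∀ v : Fin m → ℂ, v ≠ 0 → ∀ w : Fin n → ℂ,
        ∃ M ∈ Submodule.span ℂ
          (Set.range fun i => (B i).map (fun x : ℝ => (x : ℂ))),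
          M.mulVec v = w := by
  intro hC
  apply h
  intro v hv w
  have hv' : (fun i => (v i : ℂ)) ≠ 0 := by
    simp only [ne_eq, funext_iff, not_forall] at hv ⊢
    obtain ⟨i, hi⟩ := hv
    exact ⟨i, by simpa using Complex.ofReal_ne_zero.2 (by simpa using hi)⟩
  obtain ⟨M, hM, hMv⟩ := hC (fun i => (v i : ℂ)) hv' (fun j => (w j : ℂ))
  rw [Submodule.mem_span_range_iff_exists_fun ℂ] at hM
  obtain ⟨c, hc⟩ := hM
  refine ⟨∑ i, (c i).re • B i, ?_, ?_⟩
  · exact Submodule.sum_mem _ fun i _ =>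
      Submodule.smul_mem _ _ (Submodule.subset_span ⟨i, rfl⟩)
  · funext j
    have h1 : ((∑ i, c i • (B i).map (fun x : ℝ => (x : ℂ))).mulVec
        (fun i => (v i : ℂ))) j = (w j : ℂ) := by
      rw [hc]; exact congrFun hMv j
    have h2 := congrArg Complex.re h1
    simp only [Matrix.mulVec, dotProduct, Matrix.sum_apply,
      Matrix.smul_apply, Matrix.map_apply, smul_eq_mul, Finset.sum_mul,
      Complex.re_sum, Complex.mul_re, Complex.ofReal_re, Complex.ofReal_im,
      mul_zero, zero_mul, sub_zero] at h2
    simpa [Matrix.mulVec, dotProduct, Matrix.sum_apply, Matrix.smul_apply,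
      smul_eq_mul, Finset.sum_mul, mul_assoc] using h2
end

section
/- Let A ∈ GL(d,ℂ) be a diagonal matrix Diag(λ₁,…,λ_d) whose eigenvalues are unconstrained, meaning the d²−d values λ_i λ_j⁻¹ for i ≠ j are pairwise distinct and all different from 1. If matrices B₁,…,B_m are such that for every off-diagonal position (i,j) at least one B_k has nonzero (i,j)-entry, then the smallest Ad_A-invariant subspace of Mat_{d×d}(ℂ) containing Id, B₁,…,B_m is transitive. -/
lemma aux_sum_mulVec {d : ℕ} {ι : Type*} (s : Finset ι)
    (M : ι → Matrix (Fin d) (Fin d) ℂ) (v : Fin d → ℂ) :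
    (∑ i ∈ s, M i).mulVec v = ∑ i ∈ s, (M i).mulVec v := by
  classical
  induction s using Finset.induction with
  | empty => simp [Matrix.zero_mulVec]
  | insert _ _ h ih => simp [Finset.sum_insert h, Matrix.add_mulVec, ih]

/-- If `A = diagonal lam` is unconstrained (the ratios `lam i / lam j`, `i ≠ j`,
are pairwise distinct and all different from `1`) and for every off-diagonal
position some `B k` has a nonzero entry there, then the smallest
`Ad_A`-invariant subspace containing `1` and the `B k` is transitive. -/
theorem stmt11 {d m : ℕ} (lam : Fin d → ℂ) (hlam : ∀ i, lam i ≠ 0)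
    (hdist : ∀ i j i' j' : Fin d, i ≠ j → i' ≠ j' → (i, j) ≠ (i', j') →
      lam i * (lam j)⁻¹ ≠ lam i' * (lam j')⁻¹)
    (hne1 : ∀ i j : Fin d, i ≠ j → lam i * (lam j)⁻¹ ≠ 1)
    (B : Fin m → Matrix (Fin d) (Fin d) ℂ)
    (hB : ∀ i j : Fin d, i ≠ j → ∃ k, B k i j ≠ 0)
    (v : Fin d → ℂ) (hv : v ≠ 0) (w : Fin d → ℂ) :
    ∃ X ∈ Submodule.span ℂ
      {X : Matrix (Fin d) (Fin d) ℂ | ∃ t : ℕ, ∃ Y : Matrix (Fin d) (Fin d) ℂ,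
        (Y = 1 ∨ ∃ k, Y = B k) ∧
        X = (Matrix.diagonal lam) ^ t * Y * ((Matrix.diagonal lam)⁻¹) ^ t},
      X.mulVec v = w := by
  classical
  set S : Set (Matrix (Fin d) (Fin d) ℂ) :=
    {X : Matrix (Fin d) (Fin d) ℂ | ∃ t : ℕ, ∃ Y : Matrix (Fin d) (Fin d) ℂ,
        (Y = 1 ∨ ∃ k, Y = B k) ∧
        X = (Matrix.diagonal lam) ^ t * Y * ((Matrix.diagonal lam)⁻¹) ^ t} with hS
  have hDinv : (Matrix.diagonal lam)⁻¹ = Matrix.diagonal (fun i => (lam i)⁻¹) := by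
    apply Matrix.inv_eq_right_inv
    rw [Matrix.diagonal_mul_diagonal]
    have : (fun i => lam i * (lam i)⁻¹) = fun _ : Fin d => (1 : ℂ) :=
      funext fun i => mul_inv_cancel₀ (hlam i)
    rw [this]
    exact Matrix.diagonal_one
  have hent : ∀ (t : ℕ) (Y : Matrix (Fin d) (Fin d) ℂ) (i j : Fin d),
      ((Matrix.diagonal lam) ^ t * Y * ((Matrix.diagonal lam)⁻¹) ^ t) i j
        = (lam i * (lam j)⁻¹) ^ t * Y i j := by
    intro t Y i j
    rw [hDinv, Matrix.diagonal_pow, Matrix.diagonal_pow, Matrix.mul_diagonal,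
      Matrix.diagonal_mul, Pi.pow_apply, Pi.pow_apply, mul_pow]
    ring
  -- off-diagonal elementary matrices lie in the span
  have hE : ∀ i0 j0 : Fin d, i0 ≠ j0 →
      Matrix.single i0 j0 (1 : ℂ) ∈ Submodule.span ℂ S := by
    intro i0 j0 hij
    obtain ⟨k, hk⟩ := hB i0 j0 hij
    set μ0 : ℂ := lam i0 * (lam j0)⁻¹ with hμ0
    set T' : Finset ℂ :=
      (Finset.univ.image (fun p : Fin d × Fin d => lam p.1 * (lam p.2)⁻¹)).erase μ0 with hT'
    set q : Polynomial ℂ := ∏ c ∈ T', (Polynomial.X - Polynomial.C c) with hq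
    have hq0 : q.eval μ0 ≠ 0 := by
      rw [hq, Polynomial.eval_prod]
      apply Finset.prod_ne_zero_iff.2
      intro c hc
      simp only [Polynomial.eval_sub, Polynomial.eval_X, Polynomial.eval_C]
      exact sub_ne_zero_of_ne (Finset.ne_of_mem_erase hc).symm
    set p : Polynomial ℂ := Polynomial.C (q.eval μ0)⁻¹ * q with hp
    have hpeval0 : p.eval μ0 = 1 := by
      rw [hp, Polynomial.eval_mul, Polynomial.eval_C]
      exact inv_mul_cancel₀ hq0
    have hpeval : ∀ x : ℂ,
        x ∈ Finset.univ.image (fun p : Fin d × Fin d => lam p.1 * (lam p.2)⁻¹) →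
        x ≠ μ0 → p.eval x = 0 := by
      intro x hx hxne
      have hz : Polynomial.eval x q = 0 := by
        rw [hq, Polynomial.eval_prod]
        exact Finset.prod_eq_zero (Finset.mem_erase.2 ⟨hxne, hx⟩) (by simp)
      rw [hp, Polynomial.eval_mul, Polynomial.eval_C, hz, mul_zero]
    have key : ∑ t ∈ Finset.range (p.natDegree + 1),
        p.coeff t • ((Matrix.diagonal lam) ^ t * B k * ((Matrix.diagonal lam)⁻¹) ^ t)
        = B k i0 j0 • Matrix.single i0 j0 (1 : ℂ) := by
      ext i j
      rw [Matrix.sum_apply]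
      simp only [Matrix.smul_apply, hent, smul_eq_mul]
      have hstep : ∑ t ∈ Finset.range (p.natDegree + 1),
          p.coeff t * ((lam i * (lam j)⁻¹) ^ t * B k i j)
          = p.eval (lam i * (lam j)⁻¹) * B k i j := by
        rw [Polynomial.eval_eq_sum_range, Finset.sum_mul]
        exact Finset.sum_congr rfl fun t _ => by ring
      rw [hstep]
      by_cases h : (i, j) = (i0, j0)
      · obtain ⟨h1, h2⟩ := Prod.mk.injEq .. ▸ h
        subst h1; subst h2
        rw [← hμ0, hpeval0]
        simp [Matrix.single]
      · have hxne : lam i * (lam j)⁻¹ ≠ μ0 := by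
          by_cases hij' : i = j
          · subst hij'
            rw [mul_inv_cancel₀ (hlam i)]
            exact fun hcon => hne1 i0 j0 hij hcon.symm
          · exact hdist i j i0 j0 hij' hij h
        rw [hpeval _ (Finset.mem_image.2 ⟨(i, j), Finset.mem_univ _, rfl⟩) hxne]
        have : Matrix.single i0 j0 (1 : ℂ) i j = 0 := by
          simp only [Matrix.single, Matrix.of_apply]
          rw [if_neg]
          intro ⟨h1, h2⟩
          exact h (by rw [h1, h2])
        rw [this, zero_mul, mul_zero]
    have hmem : (B k i0 j0) • Matrix.single i0 j0 (1 : ℂ) ∈ Submodule.span ℂ S := by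
      rw [← key]
      exact Submodule.sum_mem _ fun t _ => Submodule.smul_mem _ _
        (Submodule.subset_span ⟨t, B k, Or.inr ⟨k, rfl⟩, rfl⟩)
    have := Submodule.smul_mem _ (B k i0 j0)⁻¹ hmem
    rwa [smul_smul, inv_mul_cancel₀ hk, one_smul] at this
  have h1 : (1 : Matrix (Fin d) (Fin d) ℂ) ∈ Submodule.span ℂ S :=
    Submodule.subset_span ⟨0, 1, Or.inl rfl, by simp⟩
  obtain ⟨i0, hi0⟩ := Function.ne_iff.1 hv
  have hi0 : v i0 ≠ 0 := hi0
  set a : ℂ := w i0 / v i0 with ha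
  set f : Fin d → ℂ := fun i => if i = i0 then 0 else (w i - a * v i) / v i0 with hf
  refine ⟨a • 1 + ∑ i, Matrix.single i i0 (f i), ?_, ?_⟩
  · refine Submodule.add_mem _ (Submodule.smul_mem _ _ h1)
      (Submodule.sum_mem _ fun i _ => ?_)
    by_cases h : i = i0
    · have : f i = 0 := by rw [hf]; simp [h]
      rw [this, Matrix.single_zero]
      exact Submodule.zero_mem _
    · have := Submodule.smul_mem _ (f i) (hE i i0 h)
      rwa [Matrix.smul_single, smul_eq_mul, mul_one] at this
  · rw [Matrix.add_mulVec, Matrix.smul_mulVec, Matrix.one_mulVec, aux_sum_mulVec]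
    have hsum : ∑ i, (Matrix.single i i0 (f i)).mulVec v
        = fun i => f i * v i0 := by
      have : ∀ i : Fin d, (Matrix.single i i0 (f i)).mulVec v
          = Pi.single i (f i * v i0) := fun i => Matrix.single_mulVec i i0 (f i) v
      rw [funext this]
      exact Finset.univ_sum_single (fun i => f i * v i0)
    rw [hsum]
    funext i
    by_cases h : i = i0
    · subst h
      simp only [Pi.add_apply, Pi.smul_apply, smul_eq_mul]
      have hfi : f i = 0 := by simp [hf]
      rw [hfi, zero_mul, add_zero, ha, div_mul_cancel₀ _ hi0]
    · simp only [Pi.add_apply, Pi.smul_apply, smul_eq_mul]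
      have hfi : f i = (w i - a * v i) / v i0 := by simp [hf, h]
      rw [hfi, div_mul_cancel₀ _ hi0]
      ring
end

section
/- Let λ, μ be nonzero complex numbers and s, t ≥ 1. The operator X ↦ J_t(λ) · X · J_s(μ)⁻¹ on Mat_{t×s}(ℂ) has exactly one eigenvalue, namely λ/μ, and the geometric multiplicity of this eigenvalue is min(t, s). -/
/-- The `t × t` Jordan block with eigenvalue `lam`. -/
noncomputable def jordanBlock (t : ℕ) (lam : ℂ) : Matrix (Fin t) (Fin t) ℂ :=
  Matrix.of fun i j => if i = j then lam else if (i : ℕ) + 1 = (j : ℕ) then 1 else 0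

/-- The linear operator `X ↦ J_t(λ) · X · J_s(μ)⁻¹` on `t × s` matrices. -/
noncomputable def conjOp (t s : ℕ) (lam mu : ℂ) :
    Matrix (Fin t) (Fin s) ℂ →ₗ[ℂ] Matrix (Fin t) (Fin s) ℂ where
  toFun X := jordanBlock t lam * X * (jordanBlock s mu)⁻¹
  map_add' X Y := by (try simp only []); rw [Matrix.mul_add, Matrix.add_mul]
  map_smul' a X := by
    simp [Matrix.mul_smul, Matrix.smul_mul]

namespace Stmt13

open Matrix

lemma jb_eq (n : ℕ) (a : ℂ) :
    jordanBlock n a = a • (1 : Matrix (Fin n) (Fin n) ℂ) + jordanBlock n 0 := by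
  ext i j
  by_cases h : i = j <;> simp [jordanBlock, Matrix.one_apply, h]

lemma N_apply {n : ℕ} (i b : Fin n) :
    jordanBlock n 0 i b = if (i : ℕ) + 1 = (b : ℕ) then 1 else 0 := by
  simp only [jordanBlock, Matrix.of_apply]
  by_cases h : i = b
  · subst h; rw [if_pos rfl, if_neg (by omega)]
  · rw [if_neg h]

lemma N_mul_apply {t n : ℕ} (X : Matrix (Fin t) (Fin n) ℂ) (i : Fin t) (j : Fin n) :
    (jordanBlock t 0 * X) i j = if h : (i : ℕ) + 1 < t then X ⟨(i : ℕ) + 1, h⟩ j else 0 := by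
  rw [Matrix.mul_apply]
  split_ifs with h
  · rw [Finset.sum_eq_single (⟨(i : ℕ) + 1, h⟩ : Fin t)]
    · rw [N_apply, if_pos rfl, one_mul]
    · intro b _ hb
      rw [N_apply, if_neg, zero_mul]
      intro hc; exact hb (Fin.ext hc.symm)
    · intro hm; exact absurd (Finset.mem_univ _) hm
  · refine Finset.sum_eq_zero fun b _ => ?_
    rw [N_apply, if_neg, zero_mul]
    intro hc
    have := b.isLt; omega
  
lemma M_mul_apply' {t s : ℕ} (X : Matrix (Fin t) (Fin s) ℂ) (i : Fin t) (j : Fin s) :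
    (X * jordanBlock s 0) i j =
      if h : 0 < (j : ℕ) then X i ⟨(j : ℕ) - 1, Nat.lt_of_le_of_lt (Nat.sub_le _ _) j.isLt⟩
      else 0 := by
  rw [Matrix.mul_apply]
  split_ifs with h
  · rw [Finset.sum_eq_single (⟨(j : ℕ) - 1, Nat.lt_of_le_of_lt (Nat.sub_le _ _) j.isLt⟩ : Fin s)]
    · rw [N_apply, if_pos (show ((j : ℕ) - 1) + 1 = (j : ℕ) by omega), mul_one]
    · intro b _ hb
      rw [N_apply, if_neg, mul_zero]
      intro hc; exact hb (Fin.ext (show (b : ℕ) = (j : ℕ) - 1 by omega))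
    · intro hm; exact absurd (Finset.mem_univ _) hm
  · refine Finset.sum_eq_zero fun b _ => ?_
    rw [N_apply, if_neg, mul_zero]
    omega

lemma N_pow_apply {t : ℕ} (k : ℕ) (i j : Fin t) :
    ((jordanBlock t 0) ^ k) i j = if (i : ℕ) + k = (j : ℕ) then 1 else 0 := by
  induction k generalizing i with
  | zero => simp [Matrix.one_apply, Fin.ext_iff]
  | succ k ih =>
    rw [pow_succ', N_mul_apply]
    by_cases h : (i : ℕ) + 1 < t
    · rw [dif_pos h, ih]
      show (if ((i : ℕ) + 1) + k = (j : ℕ) then (1:ℂ) else 0) = _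
      exact if_congr (by omega) rfl rfl
    · rw [dif_neg h, if_neg (by have := j.isLt; omega)]

lemma N_pow_t {t : ℕ} : (jordanBlock t 0) ^ t = 0 := by
  ext i j
  rw [N_pow_apply, Matrix.zero_apply, if_neg]
  have := j.isLt; omega

lemma jb_det (n : ℕ) (a : ℂ) : (jordanBlock n a).det = a ^ n := by
  have h : (jordanBlock n a).BlockTriangular id := by
    intro i j hij
    have hij' : (j : ℕ) < (i : ℕ) := hij
    simp only [jordanBlock, Matrix.of_apply]
    rw [if_neg (fun hc => by subst hc; exact lt_irrefl _ hij'), if_neg (by omega)]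
  rw [Matrix.det_of_upperTriangular h]
  simp [jordanBlock]

lemma jb_mul_inv {n : ℕ} {a : ℂ} (ha : a ≠ 0) :
    jordanBlock n a * (jordanBlock n a)⁻¹ = 1 :=
  Matrix.mul_nonsing_inv _ (by rw [jb_det]; exact (pow_ne_zero n ha).isUnit)

lemma jb_inv_mul {n : ℕ} {a : ℂ} (ha : a ≠ 0) :
    (jordanBlock n a)⁻¹ * jordanBlock n a = 1 :=
  Matrix.nonsing_inv_mul _ (by rw [jb_det]; exact (pow_ne_zero n ha).isUnit)

lemma mem_eigen_iff {t s : ℕ} (lam mu : ℂ) (hmu : mu ≠ 0) (X : Matrix (Fin t) (Fin s) ℂ) :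
    X ∈ Module.End.eigenspace (conjOp t s lam mu) (lam / mu) ↔
      jordanBlock t 0 * X = (lam / mu) • (X * jordanBlock s 0) := by
  rw [Module.End.mem_eigenspace_iff]
  have hB : jordanBlock s mu * (jordanBlock s mu)⁻¹ = 1 := jb_mul_inv hmu
  have hB' : (jordanBlock s mu)⁻¹ * jordanBlock s mu = 1 := jb_inv_mul hmu
  have hco : conjOp t s lam mu X = jordanBlock t lam * X * (jordanBlock s mu)⁻¹ := rfl
  rw [hco]
  constructor
  · intro h
    have h1 : jordanBlock t lam * X = (lam / mu) • (X * jordanBlock s mu) := by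
      calc jordanBlock t lam * X
          = jordanBlock t lam * X * ((jordanBlock s mu)⁻¹ * jordanBlock s mu) := by
            rw [hB', Matrix.mul_one]
        _ = (jordanBlock t lam * X * (jordanBlock s mu)⁻¹) * jordanBlock s mu := by
            rw [← Matrix.mul_assoc]
        _ = ((lam / mu) • X) * jordanBlock s mu := by rw [h]
        _ = (lam / mu) • (X * jordanBlock s mu) := Matrix.smul_mul _ _ _
    rw [jb_eq t lam, jb_eq s mu, Matrix.add_mul, Matrix.smul_mul, Matrix.one_mul,
        Matrix.mul_add, Matrix.mul_smul, Matrix.mul_one, smul_add, smul_smul,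
        div_mul_cancel₀ lam hmu] at h1
    exact add_left_cancel h1
  · intro h
    have h1 : jordanBlock t lam * X = (lam / mu) • (X * jordanBlock s mu) := by
      rw [jb_eq t lam, jb_eq s mu, Matrix.add_mul, Matrix.smul_mul, Matrix.one_mul,
          Matrix.mul_add, Matrix.mul_smul, Matrix.mul_one, smul_add, smul_smul,
          div_mul_cancel₀ lam hmu, h]
    rw [h1, Matrix.smul_mul, Matrix.mul_assoc, hB, Matrix.mul_one]

noncomputable def lmulOp {t s : ℕ} (N : Matrix (Fin t) (Fin t) ℂ) :
    Module.End ℂ (Matrix (Fin t) (Fin s) ℂ) where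
  toFun X := N * X
  map_add' X Y := Matrix.mul_add N X Y
  map_smul' a X := by simp [Matrix.mul_smul]

noncomputable def rmulOp {t s : ℕ} (M : Matrix (Fin s) (Fin s) ℂ) :
    Module.End ℂ (Matrix (Fin t) (Fin s) ℂ) where
  toFun X := X * M
  map_add' X Y := Matrix.add_mul X Y M
  map_smul' a X := by simp [Matrix.smul_mul]

lemma lmulOp_pow {t s : ℕ} (N : Matrix (Fin t) (Fin t) ℂ) (k : ℕ)
    (Y : Matrix (Fin t) (Fin s) ℂ) : ((lmulOp N) ^ k) Y = N ^ k * Y := by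
  induction k generalizing Y with
  | zero => simp
  | succ k ih =>
    rw [pow_succ, Module.End.mul_apply, ih]
    show N ^ k * (N * Y) = N ^ (k + 1) * Y
    rw [pow_succ, Matrix.mul_assoc]

lemma rmulOp_pow {t s : ℕ} (M : Matrix (Fin s) (Fin s) ℂ) (k : ℕ)
    (Y : Matrix (Fin t) (Fin s) ℂ) : ((rmulOp M) ^ k) Y = Y * M ^ k := by
  induction k generalizing Y with
  | zero => simp
  | succ k ih =>
    rw [pow_succ, Module.End.mul_apply, ih]
    show (Y * M) * M ^ k = Y * M ^ (k + 1)
    rw [pow_succ', ← Matrix.mul_assoc]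

lemma eig_unique {t s : ℕ} (lam mu ν : ℂ) (hmu : mu ≠ 0)
    (X : Matrix (Fin t) (Fin s) ℂ) (hX0 : X ≠ 0)
    (hX : conjOp t s lam mu X = ν • X) : ν = lam / mu := by
  have hB' : (jordanBlock s mu)⁻¹ * jordanBlock s mu = 1 := jb_inv_mul hmu
  have hX' : jordanBlock t lam * X * (jordanBlock s mu)⁻¹ = ν • X := hX
  have h1 : jordanBlock t lam * X = ν • (X * jordanBlock s mu) := by
    calc jordanBlock t lam * X
        = jordanBlock t lam * X * ((jordanBlock s mu)⁻¹ * jordanBlock s mu) := by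
          rw [hB', Matrix.mul_one]
      _ = (jordanBlock t lam * X * (jordanBlock s mu)⁻¹) * jordanBlock s mu := by
          rw [← Matrix.mul_assoc]
      _ = (ν • X) * jordanBlock s mu := by rw [hX']
      _ = ν • (X * jordanBlock s mu) := Matrix.smul_mul _ _ _
  have h1' : lam • X + jordanBlock t 0 * X
      = (ν * mu) • X + ν • (X * jordanBlock s 0) := by
    rw [jb_eq t lam, jb_eq s mu, Matrix.add_mul, Matrix.smul_mul, Matrix.one_mul,
        Matrix.mul_add, Matrix.mul_smul, Matrix.mul_one, smul_add, smul_smul] at h1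
    exact h1
  set c : ℂ := lam - ν * mu with hc
  set S : Module.End ℂ (Matrix (Fin t) (Fin s) ℂ) :=
    ν • (rmulOp (jordanBlock s 0)) - lmulOp (jordanBlock t 0) with hSdef
  have e1 : lam • X = (ν * mu) • X + ν • (X * jordanBlock s 0) - jordanBlock t 0 * X := by
    rw [← h1']; abel
  have hSX : S X = c • X := by
    show ν • (X * jordanBlock s 0) - jordanBlock t 0 * X = c • X
    rw [hc, sub_smul, e1]; abel
  have hSpow : ∀ n : ℕ, (S ^ n) X = c ^ n • X := by
    intro n; induction n with
    | zero => simp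
    | succ n ih =>
      rw [pow_succ, Module.End.mul_apply, hSX, _root_.map_smul, ih, smul_smul, ← pow_succ']
  have hR : IsNilpotent (ν • (rmulOp (jordanBlock s 0) :
      Module.End ℂ (Matrix (Fin t) (Fin s) ℂ))) := by
    refine ⟨s, ?_⟩
    ext Y
    rw [smul_pow, LinearMap.smul_apply, rmulOp_pow, N_pow_t, Matrix.mul_zero, smul_zero,
      LinearMap.zero_apply]
  have hL : IsNilpotent (lmulOp (jordanBlock t 0) :
      Module.End ℂ (Matrix (Fin t) (Fin s) ℂ)) := by
    refine ⟨t, ?_⟩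
    ext Y
    rw [lmulOp_pow, N_pow_t, Matrix.zero_mul, LinearMap.zero_apply]
  have hcomm0 : Commute (rmulOp (jordanBlock s 0) :
      Module.End ℂ (Matrix (Fin t) (Fin s) ℂ)) (lmulOp (jordanBlock t 0)) := by
    apply LinearMap.ext
    intro Y
    show (jordanBlock t 0 * Y) * jordanBlock s 0 = jordanBlock t 0 * (Y * jordanBlock s 0)
    rw [Matrix.mul_assoc]
  have hcomm : Commute (ν • (rmulOp (jordanBlock s 0) :
      Module.End ℂ (Matrix (Fin t) (Fin s) ℂ))) (lmulOp (jordanBlock t 0)) :=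
    Commute.smul_left hcomm0 ν
  have hS : IsNilpotent S := Commute.isNilpotent_sub hcomm hR hL
  obtain ⟨n, hn⟩ := hS
  have h0 : c ^ n • X = 0 := by rw [← hSpow, hn, LinearMap.zero_apply]
  have hcn : c = 0 := by
    rcases smul_eq_zero.mp h0 with h | h
    · by_contra hne
      exact pow_ne_zero n hne h
    · exact absurd h hX0
  rw [eq_div_iff hmu]
  have hfin : lam - ν * mu = 0 := hcn
  linear_combination -hfin

lemma ceq {m : ℕ} (c : Fin m → ℂ) {a b : ℕ} (h : a = b) (ha : a < m) (hb : b < m) :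
    c ⟨a, ha⟩ = c ⟨b, hb⟩ := by subst h; rfl

lemma Xeq {t s : ℕ} (X : Matrix (Fin t) (Fin s) ℂ) {a b a' b' : ℕ}
    (h1 : a = a') (h2 : b = b') (ha : a < t) (hb : b < s) (ha' : a' < t) (hb' : b' < s) :
    X ⟨a, ha⟩ ⟨b, hb⟩ = X ⟨a', ha'⟩ ⟨b', hb'⟩ := by subst h1; subst h2; rfl

noncomputable def phi (t s : ℕ) (r : ℂ) : (Fin (min t s) → ℂ) →ₗ[ℂ] Matrix (Fin t) (Fin s) ℂ where
  toFun c := Matrix.of fun i j =>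
    if h : (i : ℕ) + s < (j : ℕ) + 1 + min t s ∧ (j : ℕ) < (i : ℕ) + s then
      r ^ (i : ℕ) * c ⟨(i : ℕ) + s - 1 - (j : ℕ), by omega⟩
    else 0
  map_add' x y := by
    ext i j
    simp only [Matrix.of_apply, Pi.add_apply, Matrix.add_apply]
    split_ifs <;> ring
  map_smul' a x := by
    ext i j
    simp only [Matrix.of_apply, Pi.smul_apply, Matrix.smul_apply, smul_eq_mul, RingHom.id_apply]
    split_ifs <;> ring

lemma phi_apply {t s : ℕ} (r : ℂ) (c : Fin (min t s) → ℂ) (i : Fin t) (j : Fin s) :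
    phi t s r c i j =
      if h : (i : ℕ) + s < (j : ℕ) + 1 + min t s ∧ (j : ℕ) < (i : ℕ) + s then
        r ^ (i : ℕ) * c ⟨(i : ℕ) + s - 1 - (j : ℕ), by omega⟩
      else 0 := rfl

lemma phi_apply' {t s : ℕ} (r : ℂ) (c : Fin (min t s) → ℂ) (i j : ℕ) (hi : i < t) (hj : j < s) :
    phi t s r c ⟨i, hi⟩ ⟨j, hj⟩ =
      if h : i + s < j + 1 + min t s ∧ j < i + s then
        r ^ i * c ⟨i + s - 1 - j, by omega⟩
      else 0 := rfl

lemma rel_iff' {t s : ℕ} (ht : 1 ≤ t) (r : ℂ) (X : Matrix (Fin t) (Fin s) ℂ) :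
    jordanBlock t 0 * X = r • (X * jordanBlock s 0) ↔
    ((∀ (i j : ℕ) (hi : i + 1 < t) (hj : j < s),
        X ⟨i + 1, hi⟩ ⟨j, hj⟩ =
          r * (if h : 0 < j then X ⟨i, by omega⟩ ⟨j - 1, by omega⟩ else 0)) ∧
     (∀ (j : ℕ) (hj : j < s), 0 < j →
        r * X ⟨t - 1, by omega⟩ ⟨j - 1, by omega⟩ = 0)) := by
  constructor
  · intro h
    constructor
    · intro i j hi hj
      have e := congrFun (congrFun h ⟨i, by omega⟩) ⟨j, hj⟩
      rw [N_mul_apply, Matrix.smul_apply, M_mul_apply', smul_eq_mul] at e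
      rw [dif_pos (show ((⟨i, by omega⟩ : Fin t) : ℕ) + 1 < t from hi)] at e
      exact e
    · intro j hj h0
      have e := congrFun (congrFun h ⟨t - 1, by omega⟩) ⟨j, hj⟩
      rw [N_mul_apply, Matrix.smul_apply, M_mul_apply', smul_eq_mul] at e
      rw [dif_neg (show ¬(((⟨t - 1, by omega⟩ : Fin t) : ℕ) + 1 < t) by
        show ¬(t - 1 + 1 < t); omega)] at e
      rw [dif_pos (show 0 < ((⟨j, hj⟩ : Fin s) : ℕ) from h0)] at e
      exact e.symm
  · rintro ⟨hA, hB⟩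
    ext i j
    rw [N_mul_apply, Matrix.smul_apply, M_mul_apply', smul_eq_mul]
    by_cases h1 : (i : ℕ) + 1 < t
    · rw [dif_pos h1]
      exact hA (i : ℕ) (j : ℕ) h1 j.isLt
    · rw [dif_neg h1]
      by_cases h2 : 0 < (j : ℕ)
      · rw [dif_pos h2]
        have hieq : i = ⟨t - 1, by omega⟩ := Fin.ext (show (i : ℕ) = t - 1 by have := i.isLt; omega)
        rw [hieq]
        exact (hB (j : ℕ) j.isLt h2).symm
      · rw [dif_neg h2, mul_zero]

lemma phi_mem {t s : ℕ} (ht : 1 ≤ t) (hs : 1 ≤ s) (r : ℂ) (c : Fin (min t s) → ℂ) :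
    jordanBlock t 0 * phi t s r c = r • (phi t s r c * jordanBlock s 0) := by
  rw [rel_iff' ht]
  constructor
  · intro i j hi hj
    rw [phi_apply']
    by_cases h0 : 0 < j
    · rw [dif_pos h0, phi_apply']
      by_cases hc : i + s < (j - 1) + 1 + min t s ∧ (j - 1) < i + s
      · rw [dif_pos hc,
          dif_pos (show i + 1 + s < j + 1 + min t s ∧ j < i + 1 + s by omega)]
        rw [ceq c (show i + 1 + s - 1 - j = i + s - 1 - (j - 1) by omega) (by omega) (by omega)]
        ring
      · rw [dif_neg hc, mul_zero,
          dif_neg (show ¬(i + 1 + s < j + 1 + min t s ∧ j < i + 1 + s) by omega)]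
    · rw [dif_neg h0, mul_zero,
        dif_neg (show ¬(i + 1 + s < j + 1 + min t s ∧ j < i + 1 + s) by omega)]
  · intro j hj h0
    rw [phi_apply',
      dif_neg (show ¬(t - 1 + s < (j - 1) + 1 + min t s ∧ (j - 1) < t - 1 + s) by omega),
      mul_zero]

lemma phi_inj {t s : ℕ} (ht : 1 ≤ t) (hs : 1 ≤ s) (r : ℂ) :
    Function.Injective (phi t s r) := by
  intro c1 c2 h
  funext k
  have hk := k.isLt
  have hmin : min t s ≤ s := Nat.min_le_right t s
  have e := congrFun (congrFun h ⟨0, by omega⟩) ⟨s - 1 - (k : ℕ), by omega⟩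
  have hcond : 0 + s < (s - 1 - (k : ℕ)) + 1 + min t s ∧ (s - 1 - (k : ℕ)) < 0 + s := by omega
  rw [phi_apply', phi_apply'] at e
  rw [dif_pos hcond] at e
  rw [dif_pos hcond] at e
  rw [pow_zero] at e
  rw [one_mul] at e
  rw [one_mul] at e
  rw [ceq c1 (show 0 + s - 1 - (s - 1 - (k : ℕ)) = (k : ℕ) by omega) (by omega) hk,
      ceq c2 (show 0 + s - 1 - (s - 1 - (k : ℕ)) = (k : ℕ) by omega) (by omega) hk] at e
  exact e

lemma phi_surj {t s : ℕ} (ht : 1 ≤ t) (hs : 1 ≤ s) {r : ℂ} (hr : r ≠ 0)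
    (X : Matrix (Fin t) (Fin s) ℂ)
    (hX : jordanBlock t 0 * X = r • (X * jordanBlock s 0)) :
    ∃ c, phi t s r c = X := by
  obtain ⟨hA, hB⟩ := (rel_iff' ht r X).mp hX
  have hrel : ∀ (i j : ℕ) (hi : i + 1 < t) (hj : j + 1 < s),
      X ⟨i + 1, hi⟩ ⟨j + 1, by omega⟩ = r * X ⟨i, by omega⟩ ⟨j, by omega⟩ := by
    intro i j hi hj
    have h := hA i (j + 1) hi (by omega)
    rw [dif_pos (Nat.succ_pos j)] at h
    exact h
  have hcol0 : ∀ (i : ℕ) (hi : i + 1 < t), X ⟨i + 1, hi⟩ ⟨0, by omega⟩ = 0 := by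
    intro i hi
    have h := hA i 0 hi (by omega)
    rw [dif_neg (by omega)] at h
    rw [h, mul_zero]
  have hbot : ∀ (j : ℕ) (hj : j + 1 < s), X ⟨t - 1, by omega⟩ ⟨j, by omega⟩ = 0 := by
    intro j hj
    have h := hB (j + 1) (by omega) (Nat.succ_pos j)
    rcases mul_eq_zero.mp h with h' | h'
    · exact absurd h' hr
    · exact h'
  have stepA1 : ∀ (i : ℕ) (hi : i < t) (d : ℕ) (hd : i + d < s),
      X ⟨i, hi⟩ ⟨i + d, hd⟩ = r ^ i * X ⟨0, by omega⟩ ⟨d, by omega⟩ := by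
    intro i
    induction i with
    | zero =>
      intro hi d hd
      rw [pow_zero, one_mul]
      exact Xeq X rfl (by omega) _ _ _ _
    | succ i ih =>
      intro hi d hd
      have e1 : X ⟨i + 1, hi⟩ ⟨i + 1 + d, hd⟩ = X ⟨i + 1, hi⟩ ⟨(i + d) + 1, by omega⟩ :=
        Xeq X rfl (by omega) _ _ _ _
      rw [e1, hrel i (i + d) hi (by omega), ih (by omega) d (by omega), ← mul_assoc,
        ← pow_succ']
  have stepA0 : ∀ (j i : ℕ) (hj : j < s) (hi : i < t), j < i → X ⟨i, hi⟩ ⟨j, hj⟩ = 0 := by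
    intro j
    induction j with
    | zero =>
      intro i hj hi hlt
      have e1 : X ⟨i, hi⟩ ⟨0, hj⟩ = X ⟨(i - 1) + 1, by omega⟩ ⟨0, by omega⟩ :=
        Xeq X (by omega) rfl _ _ _ _
      rw [e1, hcol0 (i - 1) (by omega)]
    | succ j ih =>
      intro i hj hi hlt
      have e1 : X ⟨i, hi⟩ ⟨j + 1, hj⟩ = X ⟨(i - 1) + 1, by omega⟩ ⟨j + 1, by omega⟩ :=
        Xeq X (by omega) rfl _ _ _ _
      rw [e1, hrel (i - 1) j (by omega) (by omega), ih (i - 1) (by omega) (by omega) (by omega),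
        mul_zero]
  have topzero : ∀ (j : ℕ) (hj : j < s), j + min t s < s →
      X ⟨0, by omega⟩ ⟨j, by omega⟩ = 0 := by
    intro j hj hlt
    have h1 := stepA1 (t - 1) (by omega) j (by omega)
    have h2 := hbot ((t - 1) + j) (by omega)
    have e1 : X ⟨t - 1, by omega⟩ ⟨t - 1 + j, by omega⟩ = 0 := h2
    rw [e1] at h1
    rcases mul_eq_zero.mp h1.symm with h' | h'
    · exact absurd h' (pow_ne_zero _ hr)
    · exact h'
  refine ⟨fun k => X ⟨0, by omega⟩ ⟨s - 1 - (k : ℕ), by omega⟩, ?_⟩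
  ext i j
  have hi := i.isLt
  have hj := j.isLt
  rw [phi_apply]
  by_cases hc : (i : ℕ) + s < (j : ℕ) + 1 + min t s ∧ (j : ℕ) < (i : ℕ) + s
  · rw [dif_pos hc]
    have hij : (i : ℕ) ≤ (j : ℕ) := by omega
    have h1 : X i j = r ^ (i : ℕ) * X ⟨0, by omega⟩ ⟨(j : ℕ) - (i : ℕ), by omega⟩ := by
      have h := stepA1 (i : ℕ) i.isLt ((j : ℕ) - (i : ℕ)) (by omega)
      have e : X ⟨(i : ℕ), i.isLt⟩ ⟨(i : ℕ) + ((j : ℕ) - (i : ℕ)), by omega⟩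
          = X ⟨(i : ℕ), i.isLt⟩ ⟨(j : ℕ), j.isLt⟩ := Xeq X rfl (by omega) _ _ _ _
      rw [e] at h
      exact h
    rw [h1]
    exact congrArg (fun z => r ^ (i : ℕ) * z) (Xeq X rfl (by simp only [Fin.val_mk]; omega)
      (by omega) (by simp only [Fin.val_mk]; omega) (by omega) (by omega))
  · rw [dif_neg hc]
    by_cases hij : (j : ℕ) < (i : ℕ)
    · exact (stepA0 (j : ℕ) (i : ℕ) j.isLt i.isLt hij).symm
    · have h1 : X i j = r ^ (i : ℕ) * X ⟨0, by omega⟩ ⟨(j : ℕ) - (i : ℕ), by omega⟩ := by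
        have h := stepA1 (i : ℕ) i.isLt ((j : ℕ) - (i : ℕ)) (by omega)
        have e : X ⟨(i : ℕ), i.isLt⟩ ⟨(i : ℕ) + ((j : ℕ) - (i : ℕ)), by omega⟩
            = X ⟨(i : ℕ), i.isLt⟩ ⟨(j : ℕ), j.isLt⟩ := Xeq X rfl (by omega) _ _ _ _
        rw [e] at h
        exact h
      rw [h1, topzero ((j : ℕ) - (i : ℕ)) (by omega) (by omega), mul_zero]

end Stmt13

/-- The operator `X ↦ J_t(λ) X J_s(μ)⁻¹` has exactly one eigenvalue, namely
`λ/μ`, and the geometric multiplicity of this eigenvalue is `min t s`. -/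
theorem stmt13 (t s : ℕ) (ht : 1 ≤ t) (hs : 1 ≤ s) (lam mu : ℂ)
    (hlam : lam ≠ 0) (hmu : mu ≠ 0) :
    (∀ ν : ℂ, Module.End.HasEigenvalue (conjOp t s lam mu) ν ↔ ν = lam / mu) ∧
      Module.finrank ℂ
        (Module.End.eigenspace (conjOp t s lam mu) (lam / mu)) = min t s := by
  have hr : lam / mu ≠ 0 := div_ne_zero hlam hmu
  have hmem : ∀ c, Stmt13.phi t s (lam / mu) c ∈
      Module.End.eigenspace (conjOp t s lam mu) (lam / mu) :=
    fun c => (Stmt13.mem_eigen_iff lam mu hmu _).mpr (Stmt13.phi_mem ht hs _ c)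
  constructor
  · intro ν
    constructor
    · intro hν
      obtain ⟨X, hXv⟩ := hν.exists_hasEigenvector
      exact Stmt13.eig_unique lam mu ν hmu X hXv.2
        (Module.End.mem_eigenspace_iff.mp hXv.1)
    · rintro rfl
      have h1 : Stmt13.phi t s (lam / mu) (fun _ => 1) ≠ 0 := by
        intro h
        have h2 := Stmt13.phi_inj ht hs (lam / mu) (h.trans (map_zero _).symm)
        have h3 := congrFun h2 ⟨0, by omega⟩
        simp at h3
      exact Module.End.hasEigenvalue_of_hasEigenvector ⟨hmem _, h1⟩
  · let ψ : (Fin (min t s) → ℂ) →ₗ[ℂ]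
        (Module.End.eigenspace (conjOp t s lam mu) (lam / mu)) :=
      LinearMap.codRestrict _ (Stmt13.phi t s (lam / mu)) hmem
    have hbij : Function.Bijective ψ := by
      constructor
      · intro c1 c2 h
        exact Stmt13.phi_inj ht hs _ (congrArg Subtype.val h)
      · rintro ⟨X, hX⟩
        obtain ⟨c, hc⟩ := Stmt13.phi_surj ht hs hr X
          ((Stmt13.mem_eigen_iff lam mu hmu X).mp hX)
        exact ⟨c, Subtype.ext hc⟩
    rw [← LinearEquiv.finrank_eq (LinearEquiv.ofBijective ψ hbij)]
    exact Module.finrank_fin_fun ℂ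
end

section
/- Sudoku transitivity criterion: Let partitions of [1,t] and [1,s] into intervals be given, inducing a partition 𝓡 of the index set [1,t]×[1,s] into rectangles. Let Λ be a subspace of t×s complex matrices. For a rectangle R ∈ 𝓡, say a matrix M ∈ Λ is R-adapted if all entries of M lying strictly above-left of R in column index and strictly below-right of R in row index vanish, i.e., M has block form with nonzero blocks only in the upper-left block, the block R itself, and the lower-right block. Define Λ^{[R]} as the set of R-submatrices of R-adapted elements of Λ. If Λ^{[R]} is a transitive space of matrices (of the appropriate rectangular size, in the sense that its orbit of every nonzero vector is the full target space) for every R ∈ 𝓡, then Λ is a transitive subspace of L(ℂˢ, ℂᵗ). -/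
/-- Sudoku transitivity criterion.  Partitions of the row indices `Fin t` and
column indices `Fin s` into intervals are encoded by monotone block-labelling
maps `r : Fin t → ℕ` and `c : Fin s → ℕ` (the fibers are the intervals).  A
matrix `M` is adapted to the rectangle `R = (a, b)` if its entries vanish
outside the three diagonal blocks: above-left of `R`, `R` itself, and
below-right of `R`.  If for every rectangle `R` the space `Λ^{[R]}` of
`R`-submatrices of `R`-adapted elements of `Λ` is transitive (for every nonzero
vector supported on the columns of `R` and every target on the rows of `R`,
some adapted `M ∈ Λ` realizes it), then `Λ` is transitive. -/
theorem stmt16 (t s : ℕ) (r : Fin t → ℕ) (c : Fin s → ℕ)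
    (hr : Monotone r) (hc : Monotone c)
    (Λ : Submodule ℂ (Matrix (Fin t) (Fin s) ℂ))
    (htrans : ∀ a ∈ Set.range r, ∀ b ∈ Set.range c,
      ∀ u : Fin s → ℂ, (∀ j, c j ≠ b → u j = 0) → u ≠ 0 →
      ∀ w : Fin t → ℂ,
        ∃ M ∈ Λ,
          (∀ i j, M i j ≠ 0 →
            (r i < a ∧ c j < b) ∨ (r i = a ∧ c j = b) ∨ (a < r i ∧ b < c j)) ∧
          ∀ i, r i = a → M.mulVec u i = w i)
    (u : Fin s → ℂ) (hu : u ≠ 0) (w : Fin t → ℂ) :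
    ∃ M ∈ Λ, M.mulVec u = w := by
  -- extract a nonzero coordinate of u
  obtain ⟨j₁, hj₁⟩ : ∃ j, u j ≠ 0 := by
    by_contra h
    push_neg at h
    exact hu (funext fun j => h j)
  -- b = minimal column-block among the support of u
  set S : Finset ℕ := (Finset.univ.filter fun j => u j ≠ 0).image c with hS
  have hSne : S.Nonempty := ⟨c j₁, Finset.mem_image.2 ⟨j₁, Finset.mem_filter.2 ⟨Finset.mem_univ _, hj₁⟩, rfl⟩⟩
  set b : ℕ := S.min' hSne with hbdef
  obtain ⟨j₀, hj₀mem, hj₀c⟩ : ∃ j₀, u j₀ ≠ 0 ∧ c j₀ = b := by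
    have hmem : b ∈ S := S.min'_mem hSne
    rw [hS] at hmem
    obtain ⟨j, hj, hjc⟩ := Finset.mem_image.1 hmem
    exact ⟨j, (Finset.mem_filter.1 hj).2, hjc⟩
  have hbmin : ∀ j, c j < b → u j = 0 := by
    intro j hj
    by_contra h
    have : c j ∈ S := Finset.mem_image.2 ⟨j, Finset.mem_filter.2 ⟨Finset.mem_univ _, h⟩, rfl⟩
    exact absurd (S.min'_le _ this) (not_le.2 hj)
  -- the restriction of u to the block b
  set u' : Fin s → ℂ := fun j => if c j = b then u j else 0 with hu'def
  have hu'supp : ∀ j, c j ≠ b → u' j = 0 := fun j hj => if_neg hj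
  have hu'ne : u' ≠ 0 := by
    intro h
    have : u' j₀ = 0 := by rw [h]; rfl
    rw [hu'def] at this
    simp only [hj₀c, if_pos rfl] at this
    exact hj₀mem this
  -- main induction: handle all rows with block label < n
  have key : ∀ n : ℕ, ∃ M ∈ Λ, ∀ i, r i < n → M.mulVec u i = w i := by
    intro n
    induction n with
    | zero =>
      exact ⟨0, Λ.zero_mem, fun i hi => absurd hi (Nat.not_lt_zero _)⟩
    | succ n ih =>
      obtain ⟨M, hM, hMw⟩ := ih
      by_cases hn : n ∈ Set.range r
      · obtain ⟨M', hM', hadapt, hact⟩ :=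
          htrans n hn b ⟨j₀, hj₀c⟩ u' hu'supp hu'ne (fun i => w i - M.mulVec u i)
        refine ⟨M + M', Λ.add_mem hM hM', fun i hi => ?_⟩
        rw [Matrix.add_mulVec]
        rcases Nat.lt_succ_iff_lt_or_eq.1 hi with hlt | heq
        · have hzero : M'.mulVec u i = 0 := by
            rw [Matrix.mulVec, dotProduct]
            apply Finset.sum_eq_zero
            intro j _
            by_cases hMij : M' i j = 0
            · rw [hMij, zero_mul]
            · rcases hadapt i j hMij with ⟨_, hcj⟩ | ⟨hri, _⟩ | ⟨hri, _⟩
              · rw [hbmin j hcj, mul_zero]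
              · omega
              · omega
          simp only [Pi.add_apply, hzero, hMw i hlt, add_zero]
        · have hMu : M'.mulVec u i = M'.mulVec u' i := by
            rw [Matrix.mulVec, Matrix.mulVec, dotProduct, dotProduct]
            apply Finset.sum_congr rfl
            intro j _
            by_cases hcj : c j = b
            · rw [hu'def]; simp [hcj]
            · by_cases hMij : M' i j = 0
              · rw [hMij, zero_mul, zero_mul]
              · rcases hadapt i j hMij with ⟨hri, _⟩ | ⟨_, hcb⟩ | ⟨hri, _⟩
                · omega
                · exact absurd hcb hcj
                · omega
          have := hact i heq
          simp only [Pi.add_apply, hMu, this]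
          ring
      · refine ⟨M, hM, fun i hi => hMw i ?_⟩
        have : r i ≠ n := fun h => hn ⟨i, h⟩
        omega
  obtain ⟨M, hM, hMw⟩ := key ((Finset.univ.sup r) + 1)
  refine ⟨M, hM, funext fun i => hMw i ?_⟩
  exact Nat.lt_succ_of_le (Finset.le_sup (Finset.mem_univ i))
end
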